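/- arXiv:0805.4269 — 3 statements merged into one kernel-verified Lean document; each statement's English description precedes it below -/
import Mathlib

section
/- Let $G$ be a finite $p$-group acting by $R$-algebra automorphisms on an $R$-algebra $M$ over a commutative ring $R$ with $pR \neq R$, such that $M$ has an $R$-basis $\mathcal{B}$ permuted by $G$. Write $ab = \sum_{c \in \mathcal{B}} \lambda_{a,b,c}\, c$ for $a, b \in \mathcal{B}$. Then for $a, b \in \mathcal{B}^G$, in the Brauer quotient one has $\mathrm{br}_G(a)\,\mathrm{br}_G(b) = \sum_{c \in \mathcal{B}^G} \pi(\lambda_{a,b,c})\, \mathrm{br}_G(c)$, where $\pi : R \to R/pR$ is the canonical map. -/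
noncomputable section

section Brauer
variable (G : Type) [Group G] [Finite G] (R : Type) [CommRing R] (M : Type) [AddCommGroup M]
  [Module R M] [DistribMulAction G M] [SMulCommClass G R M]

def relTr (H : Subgroup G) (m : M) : M := ∑ᶠ x : G ⧸ H, (Quotient.out x : G) • m

def fixedPt (H : Subgroup G) : Set M := {m | ∀ h ∈ H, h • m = m}

def trSub : Submodule R M :=
  Submodule.span R (⋃ H ∈ {H : Subgroup G | H ≠ ⊤}, (relTr G M H) '' (fixedPt G M H))
end Brauer

section Aux
variable {G : Type} [Group G] [Finite G] {R : Type} [CommRing R] {M : Type} [AddCommGroup M]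
  [Module R M] [DistribMulAction G M] [SMulCommClass G R M]
  {ι : Type} [MulAction G ι] (𝓑 : Module.Basis ι R M)

lemma repr_smul_aux (h𝓑 : ∀ (σ : G) (i : ι), σ • 𝓑 i = 𝓑 (σ • i)) (σ : G) (c : ι) (m : M) :
    𝓑.repr (σ • m) (σ • c) = 𝓑.repr m c := by
  let L1 : M →ₗ[R] R := (Finsupp.lapply (σ • c)) ∘ₗ (𝓑.repr : M →ₗ[R] ι →₀ R) ∘ₗ
    (DistribSMul.toLinearMap R M σ)
  let L2 : M →ₗ[R] R := (Finsupp.lapply c) ∘ₗ (𝓑.repr : M →ₗ[R] ι →₀ R)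
  have hL : L1 = L2 := by
    apply Module.Basis.ext 𝓑
    intro j
    simp only [L1, L2, LinearMap.comp_apply, DistribSMul.toLinearMap_apply,
      LinearEquiv.coe_coe, h𝓑, Module.Basis.repr_self, Finsupp.lapply_apply]
    classical
    rw [Finsupp.single_apply, Finsupp.single_apply]
    simp [smul_left_cancel_iff]
  exact LinearMap.congr_fun hL m

/-- The orbit sum of a non-fixed basis element lies in the trace submodule. -/
lemma orbit_sum_mem (h𝓑 : ∀ (σ : G) (i : ι), σ • 𝓑 i = 𝓑 (σ • i)) (r : R) (c : ι) (hc : ¬ ∀ σ : G, σ • c = c) :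
    ∑ d ∈ (Set.finite_range (fun g : G => g • c)).toFinset, r • 𝓑 d ∈ trSub G R M := by
  classical
  have hHne : MulAction.stabilizer G c ≠ ⊤ := by
    intro h
    exact hc fun σ => by
      have : σ ∈ MulAction.stabilizer G c := h ▸ Subgroup.mem_top σ
      exact this
  have hfix : (r • 𝓑 c) ∈ fixedPt G M (MulAction.stabilizer G c) := by
    intro h hh
    rw [smul_comm, h𝓑, show h • c = c from hh]
  have key : relTr G M (MulAction.stabilizer G c) (r • 𝓑 c) =
      ∑ d ∈ (Set.finite_range (fun g : G => g • c)).toFinset, r • 𝓑 d := by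
    haveI : Fintype (G ⧸ MulAction.stabilizer G c) := Fintype.ofFinite _
    rw [relTr, finsum_eq_sum_of_fintype]
    refine Finset.sum_bij (fun (x : G ⧸ MulAction.stabilizer G c) _ => Quotient.out x • c) ?_ ?_ ?_ ?_
    · intro x _
      simp only [Set.Finite.mem_toFinset, Set.mem_range]
      exact ⟨_, rfl⟩
    · intro x _ y _ hxy
      have hmem : (Quotient.out x)⁻¹ * Quotient.out y ∈ MulAction.stabilizer G c := by
        have hxy' : Quotient.out x • c = Quotient.out y • c := hxy
        rw [MulAction.mem_stabilizer_iff, mul_smul, ← hxy', inv_smul_smul]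
      calc x = ⟦Quotient.out x⟧ := (Quotient.out_eq x).symm
        _ = ⟦Quotient.out y⟧ := Quotient.sound ((QuotientGroup.leftRel_apply).mpr hmem)
        _ = y := Quotient.out_eq y
    · intro d hd
      rw [Set.Finite.mem_toFinset, Set.mem_range] at hd
      obtain ⟨g, rfl⟩ := hd
      refine ⟨⟦g⟧, Finset.mem_univ _, ?_⟩
      have hrel : g⁻¹ * Quotient.out (⟦g⟧ : G ⧸ MulAction.stabilizer G c) ∈ MulAction.stabilizer G c := by
        rw [← QuotientGroup.leftRel_apply]
        exact Quotient.exact (Quotient.out_eq (⟦g⟧ : G ⧸ MulAction.stabilizer G c)).symm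
      rw [MulAction.mem_stabilizer_iff] at hrel
      calc Quotient.out (⟦g⟧ : G ⧸ MulAction.stabilizer G c) • c
          = g • (g⁻¹ * Quotient.out (⟦g⟧ : G ⧸ MulAction.stabilizer G c)) • c := by rw [← mul_smul]; group
        _ = g • c := by rw [hrel]
    · intro x _
      rw [smul_comm, h𝓑]
  rw [← key]
  apply Submodule.subset_span
  refine Set.mem_biUnion (show MulAction.stabilizer G c ∈ {H : Subgroup G | H ≠ ⊤} from hHne) ?_
  exact ⟨r • 𝓑 c, hfix, rfl⟩

end Aux

theorem statement3 (p : ℕ) (hp : p.Prime) (G : Type) [Group G] [Finite G] (hG : IsPGroup p G)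
    (R : Type) [CommRing R] (hpR : Ideal.span {(p : R)} ≠ ⊤)
    (M : Type) [Ring M] [Algebra R M] [MulSemiringAction G M] [SMulCommClass G R M]
    (ι : Type) [MulAction G ι] (𝓑 : Module.Basis ι R M)
    (h𝓑 : ∀ (σ : G) (i : ι), σ • 𝓑 i = 𝓑 (σ • i))
    (a b : ι) (ha : ∀ σ : G, σ • a = a) (hb : ∀ σ : G, σ • b = b) :
    𝓑 a * 𝓑 b -
      (∑ᶠ c ∈ {c : ι | ∀ σ : G, σ • c = c}, (𝓑.repr (𝓑 a * 𝓑 b)) c • 𝓑 c)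
      ∈ trSub G R M := by
  classical
  set m := 𝓑 a * 𝓑 b with hm
  set f := 𝓑.repr m with hf
  have hmfix : ∀ σ : G, σ • m = m := by
    intro σ
    rw [hm, smul_mul', h𝓑, h𝓑, ha, hb]
  have hfinv : ∀ (σ : G) (c : ι), f (σ • c) = f c := by
    intro σ c
    rw [hf, ← repr_smul_aux 𝓑 h𝓑 σ c m, hmfix]
  -- rewrite finsum as a finite sum over the filtered support
  have hsupp : Function.support (fun c => f c • 𝓑 c) = ↑f.support := by
    ext c
    simp only [Function.mem_support, Finset.coe_sort_coe, Finsupp.mem_support_iff,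
      Finset.mem_coe]
    constructor
    · intro h h0; exact h (by rw [h0, zero_smul])
    · intro h h0
      apply h
      have := congrArg (fun x => 𝓑.repr x c) h0
      simpa [Finsupp.single_apply] using this
  have hfin : (∑ᶠ c ∈ {c : ι | ∀ σ : G, σ • c = c}, f c • 𝓑 c) =
      ∑ c ∈ f.support.filter (fun c => ∀ σ : G, σ • c = c), f c • 𝓑 c := by
    apply finsum_mem_eq_sum_of_inter_support_eq
    rw [hsupp]
    ext c
    simp only [Set.mem_inter_iff, Set.mem_setOf_eq, Finset.coe_filter, Finset.mem_coe,
      Finsupp.mem_support_iff]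
    tauto
  have hmsum : m = ∑ c ∈ f.support, f c • 𝓑 c := by
    conv_lhs => rw [← 𝓑.linearCombination_repr m]
    rw [Finsupp.linearCombination_apply, Finsupp.sum]
  -- the main induction
  have main : ∀ (n : ℕ) (T : Finset ι), T.card = n →
      (∀ (σ : G) (c : ι), c ∈ T → σ • c ∈ T) →
      (∀ c ∈ T, ¬ ∀ σ : G, σ • c = c) →
      (∑ c ∈ T, f c • 𝓑 c) ∈ trSub G R M := by
    intro n
    induction n using Nat.strong_induction_on with
    | _ n ih =>
      intro T hcard hinv hnf
      rcases T.eq_empty_or_nonempty with rfl | ⟨c, hc⟩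
      · simp
      · set O := (Set.finite_range (fun g : G => g • c)).toFinset with hO
        have hOmem : ∀ d, d ∈ O ↔ ∃ g : G, g • c = d := by
          intro d; rw [hO, Set.Finite.mem_toFinset, Set.mem_range]
        have hOsub : O ⊆ T := by
          intro d hd
          obtain ⟨g, rfl⟩ := (hOmem d).mp hd
          exact hinv g c hc
        have hcO : c ∈ O := (hOmem c).mpr ⟨1, one_smul _ _⟩
        have horb : (∑ d ∈ O, f d • 𝓑 d) ∈ trSub G R M := by
          have : (∑ d ∈ O, f d • 𝓑 d) = ∑ d ∈ O, f c • 𝓑 d := by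
            apply Finset.sum_congr rfl
            intro d hd
            obtain ⟨g, rfl⟩ := (hOmem d).mp hd
            rw [hfinv]
          rw [this]
          exact orbit_sum_mem 𝓑 h𝓑 (f c) c (hnf c (hOsub hcO))
        have hsplit : ∑ c ∈ T, f c • 𝓑 c =
            (∑ d ∈ T \ O, f d • 𝓑 d) + ∑ d ∈ O, f d • 𝓑 d :=
          (Finset.sum_sdiff hOsub).symm
        rw [hsplit]
        refine Submodule.add_mem _ ?_ horb
        have hlt : (T \ O).card < n := by
          rw [← hcard]
          exact Finset.card_lt_card (Finset.sdiff_ssubset hOsub ⟨c, hcO⟩)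
        refine ih _ hlt _ rfl ?_ ?_
        · intro σ d hd
          rw [Finset.mem_sdiff] at hd ⊢
          refine ⟨hinv σ d hd.1, ?_⟩
          intro hmem
          apply hd.2
          obtain ⟨g, hg⟩ := (hOmem _).mp hmem
          refine (hOmem d).mpr ⟨σ⁻¹ * g, ?_⟩
          rw [mul_smul, hg, inv_smul_smul]
        · intro d hd
          exact hnf d (Finset.mem_sdiff.mp hd).1
  rw [hfin, hmsum, ← Finset.sum_filter_add_sum_filter_not f.support
    (fun c => ∀ σ : G, σ • c = c) (fun c => f c • 𝓑 c), add_sub_cancel_left]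
  refine main _ _ rfl ?_ ?_
  · intro σ c hc
    rw [Finset.mem_filter] at hc ⊢
    refine ⟨by rw [Finsupp.mem_support_iff, hfinv]; exact Finsupp.mem_support_iff.mp hc.1, ?_⟩
    intro hfix
    apply hc.2
    intro τ
    have h1 : τ • c = (σ⁻¹ * (σ * τ * σ⁻¹) * σ) • c := by group
    rw [h1, mul_smul, mul_smul, hfix]
    exact inv_smul_smul σ c
  · intro c hc
    exact (Finset.mem_filter.mp hc).2
end
end

section
/- Let $\omega$ be a $G$-orbit in $S$ such that $W_\omega$ is finite with longest element $s_\omega$. Then the fixed points of $G$ in $W_\omega$ are exactly $\{1, s_\omega\}$. -/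
namespace S9
open CoxeterSystem List
open scoped Classical

variable {B W : Type} [Group W] {M : CoxeterMatrix B} (cs : CoxeterSystem M W)

/-- The underlying function of the reflection representation permutation. -/
noncomputable def etaFun (i : B) : W × ZMod 2 → W × ZMod 2 :=
  fun p => (cs.simple i * p.1 * cs.simple i, p.2 + if p.1 = cs.simple i then 1 else 0)

lemma conj_simple_eq_iff (i : B) (t : W) :
    cs.simple i * t * cs.simple i = cs.simple i ↔ t = cs.simple i := by
  constructor
  · intro h
    have h2 : cs.simple i * (cs.simple i * t * cs.simple i) * cs.simple i = t := by
      rw [← mul_assoc, ← mul_assoc, cs.simple_mul_simple_self, one_mul, mul_assoc,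
        cs.simple_mul_simple_self, mul_one]
    rw [h, cs.simple_mul_simple_self, one_mul] at h2
    exact h2.symm
  · intro h; rw [h, cs.simple_mul_simple_self, one_mul]

lemma add_self_zmod2 : ∀ a : ZMod 2, a + a = 0 := by decide

lemma etaFun_invol (i : B) : Function.Involutive (etaFun cs i) := by
  intro p
  simp only [etaFun]
  ext
  · show cs.simple i * (cs.simple i * p.1 * cs.simple i) * cs.simple i = p.1
    rw [← mul_assoc, ← mul_assoc, cs.simple_mul_simple_self, one_mul, mul_assoc,
      cs.simple_mul_simple_self, mul_one]
  · show p.2 + (if p.1 = cs.simple i then 1 else 0)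
      + (if cs.simple i * p.1 * cs.simple i = cs.simple i then 1 else 0) = p.2
    rw [if_congr (conj_simple_eq_iff cs i p.1) rfl rfl, add_assoc]
    by_cases h : p.1 = cs.simple i <;> simp [h, add_self_zmod2]

noncomputable def eta (i : B) : Equiv.Perm (W × ZMod 2) := (etaFun_invol cs i).toPerm

lemma eta_apply (i : B) (t : W) (ε : ZMod 2) :
    eta cs i (t, ε) = (cs.simple i * t * cs.simple i, ε + if t = cs.simple i then 1 else 0) := rfl

end S9

namespace S9
open CoxeterSystem List
open scoped Classical
variable {B W : Type} [Group W] {M : CoxeterMatrix B} (cs : CoxeterSystem M W)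

lemma sj_zpow (i j : B) (e : ℤ) :
    cs.simple j * (cs.simple i * cs.simple j) ^ e
      = (cs.simple i * cs.simple j) ^ (-e) * cs.simple j := by
  have hconj : cs.simple j * (cs.simple i * cs.simple j) * (cs.simple j)⁻¹
      = (cs.simple i * cs.simple j)⁻¹ := by
    rw [cs.inv_simple, mul_inv_rev, cs.inv_simple, cs.inv_simple]
    rw [show cs.simple j * (cs.simple i * cs.simple j) * cs.simple j
        = cs.simple j * cs.simple i * (cs.simple j * cs.simple j) by group]
    rw [cs.simple_mul_simple_self, mul_one]
  have := map_zpow (MulAut.conj (cs.simple j)) (cs.simple i * cs.simple j) e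
  simp only [MulAut.conj_apply, hconj] at this
  rw [inv_zpow, ← zpow_neg] at this
  have h2 := congrArg (· * cs.simple j) this
  simp only [cs.inv_simple] at h2 ⊢
  calc cs.simple j * (cs.simple i * cs.simple j) ^ e
      = cs.simple j * (cs.simple i * cs.simple j) ^ e * cs.simple j * cs.simple j := by
        rw [mul_assoc _ (cs.simple j) (cs.simple j), cs.simple_mul_simple_self, mul_one]
    _ = (cs.simple i * cs.simple j) ^ (-e) * cs.simple j := by
        rw [h2]

lemma etaMulPow (i j : B) (k : ℕ) (t : W) (ε : ZMod 2) :
    ((eta cs i * eta cs j) ^ k) (t, ε) =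
      ((cs.simple i * cs.simple j) ^ k * t * ((cs.simple i * cs.simple j) ^ k)⁻¹,
        ε + ∑ r ∈ Finset.range k,
          ((if t = (cs.simple i * cs.simple j) ^ (-(2 * (r:ℤ))) * cs.simple j
              then (1:ZMod 2) else 0)
          + (if t = (cs.simple i * cs.simple j) ^ (-(2 * (r:ℤ)) - 1) * cs.simple j
              then (1:ZMod 2) else 0))) := by
  induction k with
  | zero => simp
  | succ k ih =>
    rw [pow_succ', Equiv.Perm.mul_apply, ih, Equiv.Perm.mul_apply, eta_apply, eta_apply]
    set a := cs.simple i with ha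
    set b := cs.simple j with hb
    set P := a * b with hP
    have hbb : b * b = 1 := cs.simple_mul_simple_self j
    have haa : a * a = 1 := cs.simple_mul_simple_self i
    have hPk : ∀ e : ℤ, b * P ^ e = P ^ (-e) * b := fun e => sj_zpow cs i j e
    have hknat : ((P:W) ^ k) = P ^ ((k:ℤ)) := (zpow_natCast P k).symm
    have hkinv : ((P:W) ^ k)⁻¹ = P ^ (-(k:ℤ)) := by rw [zpow_neg, zpow_natCast]
    have key1 : ((P:W) ^ k)⁻¹ * b * (P ^ k) = P ^ (-(2 * (k:ℤ))) * b := by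
      rw [hkinv, hknat, mul_assoc, hPk, ← mul_assoc, ← zpow_add,
        show (-(k:ℤ) + -(k:ℤ)) = -(2 * (k:ℤ)) by ring]
    have hbab : (b:W) * a * b = P ^ (-1 : ℤ) * b := by
      rw [zpow_neg_one, hP, mul_inv_rev, ha, hb, cs.inv_simple, cs.inv_simple, mul_assoc]
    have key2 : ((P:W) ^ k)⁻¹ * (b * a * b) * (P ^ k) = P ^ (-(2 * (k:ℤ)) - 1) * b := by
      rw [hbab, hkinv, hknat, mul_assoc, mul_assoc, hPk, ← mul_assoc, ← mul_assoc,
        ← zpow_add, ← zpow_add, show (-(k:ℤ) + -1 + -(k:ℤ)) = -(2 * (k:ℤ)) - 1 by ring]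
    have cond1 : (P ^ k * t * (P ^ k)⁻¹ = b) ↔ (t = P ^ (-(2 * (k:ℤ))) * b) := by
      rw [← key1]
      constructor
      · intro h; rw [← h]; group
      · intro h; rw [h]; group
    have cond2 : (b * (P ^ k * t * (P ^ k)⁻¹) * b = a)
        ↔ (t = P ^ (-(2 * (k:ℤ)) - 1) * b) := by
      rw [← key2]
      constructor
      · intro h
        rw [← h, show (P^k)⁻¹ * (b * (b * (P ^ k * t * (P ^ k)⁻¹) * b) * b) * P^k
            = (P^k)⁻¹ * ((b * b) * (P ^ k * t * (P ^ k)⁻¹) * (b * b)) * P^k by group,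
          hbb, one_mul, mul_one]
        group
      · intro h
        rw [h, show b * (P ^ k * ((P ^ k)⁻¹ * (b * a * b) * P ^ k) * (P ^ k)⁻¹) * b
            = (b * b) * a * (b * b) by group, hbb, one_mul, mul_one]
    have hfc : a * (b * (P ^ k * t * (P ^ k)⁻¹) * b) * a
        = P ^ (k+1) * t * (P ^ (k+1))⁻¹ := by
      have hPinv : (P:W)⁻¹ = b * a := by
        rw [hP, mul_inv_rev, ha, hb, cs.inv_simple, cs.inv_simple]
      rw [pow_succ' P k, mul_inv_rev, hPinv, hP]
      group
    ext
    · exact hfc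
    · show ε + (∑ r ∈ Finset.range k, _) + _ + _ = ε + ∑ r ∈ Finset.range (k+1), _
      rw [Finset.sum_range_succ, if_congr cond1 rfl rfl, if_congr cond2 rfl rfl]
      push_cast
      ring

end S9

namespace S9
open CoxeterSystem List
open scoped Classical
variable {B W : Type} [Group W] {M : CoxeterMatrix B} (cs : CoxeterSystem M W)

lemma sum_pairs (g : ℕ → ZMod 2) (m : ℕ) :
    ∑ r ∈ Finset.range m, (g (2*r) + g (2*r+1)) = ∑ q ∈ Finset.range (2*m), g q := by
  induction m with
  | zero => simp
  | succ m ih =>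
    rw [Finset.sum_range_succ, ih, Nat.mul_succ, show 2*m+2 = (2*m+1)+1 by ring,
      Finset.sum_range_succ, Finset.sum_range_succ]
    ring

lemma sum_range_add' (g : ℕ → ZMod 2) (m n : ℕ) :
    ∑ q ∈ Finset.range (m+n), g q
      = ∑ q ∈ Finset.range m, g q + ∑ q ∈ Finset.range n, g (m+q) := by
  induction n with
  | zero => simp
  | succ n ih => rw [show m + (n+1) = (m+n)+1 by ring, Finset.sum_range_succ, ih,
      Finset.sum_range_succ, add_assoc]

lemma eta_liftable : CoxeterMatrix.IsLiftable M (eta cs) := by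
  intro i j
  refine Equiv.ext fun x => ?_
  obtain ⟨t, ε⟩ := x
  rw [etaMulPow, cs.simple_mul_simple_pow i j]
  set m := M i j
  set P := cs.simple i * cs.simple j with hP
  set b := cs.simple j with hb
  have hper : ∀ e : ℤ, (P:W) ^ (e + (m:ℤ)) = P ^ e := by
    intro e
    rw [zpow_add, zpow_natCast, cs.simple_mul_simple_pow i j, mul_one]
  set g : ℕ → ZMod 2 := fun q => if t = P ^ (-(q:ℤ)) * b then 1 else 0 with hg
  have hterm : ∀ r : ℕ,
      ((if t = (P:W) ^ (-(2 * (r:ℤ))) * b then (1:ZMod 2) else 0)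
        + (if t = (P:W) ^ (-(2 * (r:ℤ)) - 1) * b then (1:ZMod 2) else 0))
      = g (2*r) + g (2*r+1) := by
    intro r
    rw [hg]
    congr 2 <;> push_cast <;> ring_nf
  rw [Finset.sum_congr rfl (fun r _ => hterm r), sum_pairs, two_mul, sum_range_add']
  have hgper : ∀ q : ℕ, g (m + q) = g q := by
    intro q
    rw [hg]
    simp only
    rw [show (-( (m+q : ℕ) :ℤ)) = -(q:ℤ) + -(m:ℤ) by push_cast; ring]
    rw [show ((P:W) ^ (-(q:ℤ) + -(m:ℤ))) = P ^ (-(q:ℤ)) * P ^ (-(m:ℤ)) by rw [zpow_add]]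
    rw [show ((P:W) ^ (-(m:ℤ))) = 1 by
      rw [zpow_neg, zpow_natCast, cs.simple_mul_simple_pow i j, inv_one], mul_one]
  rw [Finset.sum_congr rfl (fun q _ => hgper q), ← Finset.sum_add_distrib]
  rw [Finset.sum_eq_zero (fun q _ => add_self_zmod2 (g q))]
  show ((1:W) * t * 1⁻¹, ε + 0) = ((1:Equiv.Perm (W × ZMod 2))) (t, ε)
  simp

/-- The reflection representation of `W` on `W × ZMod 2`. -/
noncomputable def Phi : W →* Equiv.Perm (W × ZMod 2) :=
  cs.lift ⟨eta cs, eta_liftable cs⟩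

lemma Phi_simple (i : B) : Phi cs (cs.simple i) = eta cs i :=
  cs.lift_apply_simple (eta_liftable cs) i

end S9

namespace S9
open CoxeterSystem List
open scoped Classical
variable {B W : Type} [Group W] {M : CoxeterMatrix B} (cs : CoxeterSystem M W)

lemma Phi_wordProd (ω : List B) (t : W) (ε : ZMod 2) :
    Phi cs (cs.wordProd ω) (t, ε) =
      (cs.wordProd ω * t * (cs.wordProd ω)⁻¹,
        ε + (((cs.rightInvSeq ω).count t : ℕ) : ZMod 2)) := by
  induction ω generalizing t ε with
  | nil => simp [wordProd_nil, rightInvSeq]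
  | cons k ω' ih =>
    rw [cs.wordProd_cons, map_mul, Equiv.Perm.mul_apply, ih, Phi_simple, eta_apply]
    have hcond : (cs.wordProd ω' * t * (cs.wordProd ω')⁻¹ = cs.simple k)
        ↔ ((cs.wordProd ω')⁻¹ * cs.simple k * cs.wordProd ω' = t) := by
      constructor
      · intro h; rw [← h]; group
      · intro h; rw [← h]; group
    show _ = (cs.simple k * cs.wordProd ω' * t * (cs.simple k * cs.wordProd ω')⁻¹, _)
    refine Prod.ext ?_ ?_
    · show cs.simple k * (cs.wordProd ω' * t * (cs.wordProd ω')⁻¹) * cs.simple k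
        = cs.simple k * cs.wordProd ω' * t * (cs.simple k * cs.wordProd ω')⁻¹
      rw [mul_inv_rev, cs.inv_simple]
      group
    · show ε + ((cs.rightInvSeq ω').count t : ZMod 2) + _ = ε + _
      have : cs.rightInvSeq (k :: ω')
          = ((cs.wordProd ω')⁻¹ * cs.simple k * cs.wordProd ω') :: cs.rightInvSeq ω' := rfl
      rw [this, List.count_cons]
      by_cases h : (cs.wordProd ω')⁻¹ * cs.simple k * cs.wordProd ω' = t
      · rw [if_pos (hcond.mpr h)]
        simp only [h, beq_self_eq_true, if_true]
        push_cast
        ring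
      · rw [if_neg (fun hc => h (hcond.mp hc))]
        simp only [beq_iff_eq, if_neg h]
        push_cast
        ring

/-- The parity cocycle. -/
noncomputable def nn (w t : W) : ZMod 2 := (Phi cs w (t, 0)).2

lemma Phi_apply_eq (w t : W) (ε : ZMod 2) :
    Phi cs w (t, ε) = (w * t * w⁻¹, ε + nn cs w t) := by
  obtain ⟨ω, rfl⟩ := cs.wordProd_surjective w
  rw [Phi_wordProd]
  have : nn cs (cs.wordProd ω) t = (((cs.rightInvSeq ω).count t : ℕ) : ZMod 2) := by
    rw [nn, Phi_wordProd]
    simp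
  rw [this]

end S9

namespace S9
open CoxeterSystem List
open scoped Classical
variable {B W : Type} [Group W] {M : CoxeterMatrix B} (cs : CoxeterSystem M W)

lemma nn_wordProd (ω : List B) (t : W) :
    nn cs (cs.wordProd ω) t = (((cs.rightInvSeq ω).count t : ℕ) : ZMod 2) := by
  rw [nn, Phi_wordProd]; simp

lemma nn_cocycle (u v t : W) :
    nn cs (u * v) t = nn cs v t + nn cs u (v * t * v⁻¹) := by
  have h1 : Phi cs (u * v) (t, 0) = (u * v * t * (u*v)⁻¹, 0 + nn cs (u*v) t) :=
    Phi_apply_eq cs (u*v) t 0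
  have h2 : Phi cs (u * v) (t, 0) = Phi cs u (Phi cs v (t, 0)) := by
    rw [map_mul]; rfl
  rw [Phi_apply_eq cs v t 0, Phi_apply_eq cs u _ _] at h2
  rw [h1] at h2
  have := congrArg Prod.snd h2
  simpa using this

lemma nn_simple (i : B) (t : W) :
    nn cs (cs.simple i) t = if t = cs.simple i then 1 else 0 := by
  rw [nn, Phi_simple, eta_apply, zero_add]

/-- `nn w t = 1` implies `t` is a right inversion. -/
lemma length_lt_of_nn_one (w t : W) (h : nn cs w t = 1) :
    cs.length (w * t) < cs.length w := by
  obtain ⟨ω, hω, rfl⟩ := cs.exists_reduced_word w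
  rw [nn_wordProd] at h
  have hmem : t ∈ cs.rightInvSeq ω := by
    by_contra hmem
    rw [List.count_eq_zero_of_not_mem hmem] at h
    simp at h
  obtain ⟨⟨j, hj⟩, hget⟩ := List.mem_iff_get.mp hmem
  have hjlt : j < ω.length := by
    have := cs.length_rightInvSeq ω
    omega
  have hgetD : (cs.rightInvSeq ω).getD j 1 = t := by
    rw [List.getD_eq_getElem _ _ hj]
    exact hget
  have hprod : cs.wordProd ω * t = cs.wordProd (ω.eraseIdx j) := by
    rw [← hgetD]
    exact cs.wordProd_mul_getD_rightInvSeq ω j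
  have hlen : cs.length (cs.wordProd ω * t) ≤ (ω.eraseIdx j).length := by
    rw [hprod]
    exact cs.length_wordProd_le _
  have herase : (ω.eraseIdx j).length = ω.length - 1 := by
    rw [List.length_eraseIdx]
    simp [hjlt]
  have hω' : cs.length (cs.wordProd ω) = ω.length := hω
  omega

end S9

namespace S9
open CoxeterSystem List
open scoped Classical
variable {B W : Type} [Group W] {M : CoxeterMatrix B} (cs : CoxeterSystem M W)

lemma nn_refl_self {t : W} (ht : cs.IsReflection t) : nn cs t t = 1 := by
  obtain ⟨v, i, rfl⟩ := ht
  induction v using cs.simple_induction_left with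
  | one =>
    simp only [one_mul, inv_one, mul_one]
    rw [nn_simple]
    simp
  | mul_simple_left v j ih =>
    set t' := v * cs.simple i * v⁻¹ with ht'
    have hrw : cs.simple j * v * cs.simple i * (cs.simple j * v)⁻¹
        = cs.simple j * (t' * cs.simple j) := by
      rw [ht', mul_inv_rev, cs.inv_simple]
      group
    rw [hrw]
    have e1 := nn_cocycle cs (cs.simple j) (t' * cs.simple j)
      (cs.simple j * (t' * cs.simple j))
    have e2 := nn_cocycle cs t' (cs.simple j) (cs.simple j * (t' * cs.simple j))
    have hx : (t' * cs.simple j) * (cs.simple j * (t' * cs.simple j)) * (t' * cs.simple j)⁻¹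
        = t' := by
      rw [mul_inv_rev, cs.inv_simple]
      have hjj : cs.simple j * cs.simple j = 1 := cs.simple_mul_simple_self j
      rw [show t' * cs.simple j * (cs.simple j * (t' * cs.simple j)) * (cs.simple j * t'⁻¹)
          = t' * (cs.simple j * cs.simple j) * t' * (cs.simple j * cs.simple j) * t'⁻¹ by group,
        hjj, mul_one, mul_one, mul_assoc, mul_inv_cancel, mul_one]
    have hy : cs.simple j * (cs.simple j * (t' * cs.simple j)) * (cs.simple j)⁻¹ = t' := by
      rw [cs.inv_simple, show cs.simple j * (cs.simple j * (t' * cs.simple j)) * cs.simple j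
          = (cs.simple j * cs.simple j) * t' * (cs.simple j * cs.simple j) by group,
        cs.simple_mul_simple_self, one_mul, mul_one]
    rw [e1, e2, hx, hy, ih, nn_simple, nn_simple]
    have hiff : (cs.simple j * (t' * cs.simple j) = cs.simple j) ↔ (t' = cs.simple j) := by
      rw [← mul_assoc]
      exact conj_simple_eq_iff cs j t'
    by_cases h : t' = cs.simple j
    · rw [if_pos (hiff.mpr h), if_pos h]; decide
    · rw [if_neg (fun hc => h (hiff.mp hc)), if_neg h]; decide

end S9

namespace S9
open CoxeterSystem List
open scoped Classical
variable {B W : Type} [Group W] {M : CoxeterMatrix B} (cs : CoxeterSystem M W)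

lemma zmod2_cases : ∀ x : ZMod 2, x = 0 ∨ x = 1 := by decide

lemma nn_one_iff {t : W} (ht : cs.IsReflection t) (w : W) :
    nn cs w t = 1 ↔ cs.length (w * t) < cs.length w := by
  constructor
  · exact length_lt_of_nn_one cs w t
  · intro hlt
    rcases zmod2_cases (nn cs w t) with h0 | h1
    · exfalso
      have hco : nn cs (w * t) t = nn cs t t + nn cs w (t * t * t⁻¹) := nn_cocycle cs w t t
      rw [nn_refl_self cs ht, ht.mul_self, one_mul, ht.inv, h0, add_zero] at hco
      have := length_lt_of_nn_one cs (w * t) t hco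
      rw [mul_assoc, ht.mul_self, mul_one] at this
      omega
    · exact h1

lemma mem_closure_iff_word (I : Set B) (w : W) :
    w ∈ Subgroup.closure (cs.simple '' I)
      ↔ ∃ ω : List B, (∀ j ∈ ω, j ∈ I) ∧ w = cs.wordProd ω := by
  constructor
  · intro hw
    induction hw using Subgroup.closure_induction with
    | mem x hx =>
      obtain ⟨j, hj, rfl⟩ := hx
      exact ⟨[j], by simpa using hj, by simp⟩
    | one => exact ⟨[], by simp, by simp⟩
    | mul x y hx hy ihx ihy =>
      obtain ⟨ω₁, h₁, rfl⟩ := ihx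
      obtain ⟨ω₂, h₂, rfl⟩ := ihy
      exact ⟨ω₁ ++ ω₂, by
        intro j hj
        rcases List.mem_append.mp hj with h | h
        exacts [h₁ j h, h₂ j h], by rw [cs.wordProd_append]⟩
    | inv x hx ihx =>
      obtain ⟨ω, h₁, rfl⟩ := ihx
      exact ⟨ω.reverse, fun j hj => h₁ j (List.mem_reverse.mp hj), by simp⟩
  · rintro ⟨ω, hmem, rfl⟩
    induction ω with
    | nil => simp only [wordProd_nil]; exact Subgroup.one_mem _
    | cons k ω' ih =>
      rw [cs.wordProd_cons]
      exact Subgroup.mul_mem _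
        (Subgroup.subset_closure ⟨k, hmem k (by simp), rfl⟩)
        (ih (fun j hj => hmem j (List.mem_cons_of_mem k hj)))

lemma nn_erase {ω : List B} {t : W} (h : nn cs (cs.wordProd ω) t = 1) :
    ∃ r, r < ω.length ∧ cs.wordProd ω * t = cs.wordProd (ω.eraseIdx r) := by
  rw [nn_wordProd] at h
  have hmem : t ∈ cs.rightInvSeq ω := by
    by_contra hmem
    rw [List.count_eq_zero_of_not_mem hmem] at h
    simp at h
  obtain ⟨⟨r, hr⟩, hget⟩ := List.mem_iff_get.mp hmem
  have hrlt : r < ω.length := by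
    have := cs.length_rightInvSeq ω; omega
  refine ⟨r, hrlt, ?_⟩
  have hgetD : (cs.rightInvSeq ω).getD r 1 = t := by
    rw [List.getD_eq_getElem _ _ hr]; exact hget
  rw [← hgetD]
  exact cs.wordProd_mul_getD_rightInvSeq ω r

lemma reduce_word_aux (I : Set B) : ∀ n (ω : List B), ω.length = n → (∀ j ∈ ω, j ∈ I) →
    ∃ ψ : List B, (∀ j ∈ ψ, j ∈ I) ∧ cs.IsReduced ψ ∧ cs.wordProd ψ = cs.wordProd ω := by
  intro n
  induction n using Nat.strong_induction_on with
  | _ n ih =>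
  intro ω hlen hmem
  by_cases hred : cs.IsReduced ω
  · exact ⟨ω, hmem, hred, rfl⟩
  · have hex : ∃ k, ¬ cs.IsReduced (ω.take (k+1)) := by
      refine ⟨ω.length - 1, ?_⟩
      have hω0 : ω ≠ [] := by
        rintro rfl
        exact hred (by simp [CoxeterSystem.IsReduced])
      have : ω.length - 1 + 1 = ω.length := by
        have := List.length_pos_iff.mpr hω0; omega
      rwa [this, List.take_length]
    set k₀ := Nat.find hex with hk₀def
    have hk₀ : ¬ cs.IsReduced (ω.take (k₀+1)) := Nat.find_spec hex
    have hredk₀ : cs.IsReduced (ω.take k₀) := by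
      rcases Nat.eq_zero_or_pos k₀ with h0 | hpos
      · rw [h0]; simp [CoxeterSystem.IsReduced]
      · have := Nat.find_min hex (m := k₀ - 1) (by omega)
        rw [show k₀ - 1 + 1 = k₀ by omega] at this
        exact not_not.mp this
    have hk₀lt : k₀ < ω.length := by
      by_contra hge
      push_neg at hge
      have h2 : ω.take k₀ = ω := List.take_of_length_le hge
      rw [h2] at hredk₀
      exact hred hredk₀
    set j := ω[k₀] with hjdef
    have htake : ω.take (k₀+1) = ω.take k₀ ++ [j] := by
      rw [List.take_succ, List.getElem?_eq_getElem hk₀lt]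
      rfl
    set u := cs.wordProd (ω.take k₀) with hudef
    have hlu : cs.length u = k₀ := by
      have := hredk₀
      rwa [CoxeterSystem.IsReduced, List.length_take, min_eq_left hk₀lt.le] at this
    have hlus : cs.length (u * cs.simple j) < cs.length u := by
      have hne : cs.length (u * cs.simple j) ≠ k₀ + 1 := by
        intro heq
        apply hk₀
        rw [CoxeterSystem.IsReduced, htake, cs.wordProd_append, List.length_append,
          List.length_take, min_eq_left hk₀lt.le]
        simpa using heq
      rcases cs.length_mul_simple u j with h | h <;> omega
    have hnn : nn cs u (cs.simple j) = 1 :=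
      (nn_one_iff cs (cs.isReflection_simple j) u).mpr hlus
    obtain ⟨r, hrlt, herase⟩ := nn_erase cs hnn
    set ψ := (ω.take k₀).eraseIdx r ++ ω.drop (k₀+1) with hψdef
    have hπψ : cs.wordProd ψ = cs.wordProd ω := by
      rw [hψdef, cs.wordProd_append, ← herase]
      calc u * cs.simple j * cs.wordProd (ω.drop (k₀+1))
          = cs.wordProd (ω.take (k₀+1)) * cs.wordProd (ω.drop (k₀+1)) := by
            rw [htake, cs.wordProd_append, cs.wordProd_singleton]
        _ = cs.wordProd ω := by rw [← cs.wordProd_append, List.take_append_drop]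
    have hmemψ : ∀ x ∈ ψ, x ∈ I := by
      intro x hx
      rcases List.mem_append.mp hx with h | h
      · exact hmem x (List.Sublist.mem (List.Sublist.mem h (List.eraseIdx_sublist _ r))
          (List.take_sublist _ _))
      · exact hmem x (List.Sublist.mem h (List.drop_sublist _ _))
    have hlenψ : ψ.length < n := by
      rw [hψdef, List.length_append, List.length_eraseIdx]
      rw [List.length_take, min_eq_left hk₀lt.le] at hrlt ⊢
      simp only [hrlt, if_pos]
      rw [List.length_drop]
      omega
    obtain ⟨ω', h1, h2, h3⟩ := ih ψ.length hlenψ ψ rfl hmemψ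
    exact ⟨ω', h1, h2, by rw [h3, hπψ]⟩

lemma exists_reduced_word_in (I : Set B) (w : W)
    (hw : w ∈ Subgroup.closure (cs.simple '' I)) :
    ∃ ω : List B, (∀ j ∈ ω, j ∈ I) ∧ cs.IsReduced ω ∧ w = cs.wordProd ω := by
  obtain ⟨ω, hmem, rfl⟩ := (mem_closure_iff_word cs I _).mp hw
  obtain ⟨ψ, h1, h2, h3⟩ := reduce_word_aux cs I ω.length ω rfl hmem
  exact ⟨ψ, h1, h2, h3.symm⟩

end S9

namespace S9
open CoxeterSystem List
open scoped Classical
variable {B W : Type} [Group W] {M : CoxeterMatrix B} (cs : CoxeterSystem M W)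

lemma exists_left_descent_in (I : Set B) (w : W)
    (hw : w ∈ Subgroup.closure (cs.simple '' I)) (hne : w ≠ 1) :
    ∃ j ∈ I, cs.length (cs.simple j * w) < cs.length w := by
  obtain ⟨ω, hmem, hred, rfl⟩ := exists_reduced_word_in cs I w hw
  cases ω with
  | nil => simp at hne
  | cons j ψ =>
    refine ⟨j, hmem j (by simp), ?_⟩
    have h1 : cs.simple j * cs.wordProd (j :: ψ) = cs.wordProd ψ := by
      rw [cs.wordProd_cons, ← mul_assoc, cs.simple_mul_simple_self, one_mul]
    rw [h1]
    have h2 : cs.length (cs.wordProd ψ) ≤ ψ.length := cs.length_wordProd_le ψ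
    have h3 : cs.length (cs.wordProd (j :: ψ)) = ψ.length + 1 := by
      have := hred
      rwa [CoxeterSystem.IsReduced, List.length_cons] at this
    omega

lemma exists_right_descent_in (I : Set B) (w : W)
    (hw : w ∈ Subgroup.closure (cs.simple '' I)) (hne : w ≠ 1) :
    ∃ j ∈ I, cs.length (w * cs.simple j) < cs.length w := by
  obtain ⟨ω, hmem, hred, rfl⟩ := exists_reduced_word_in cs I w hw
  rcases List.eq_nil_or_concat ω with rfl | ⟨ψ, j, rfl⟩
  · simp at hne
  · refine ⟨j, hmem j (by simp), ?_⟩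
    have h1 : cs.wordProd (ψ.concat j) * cs.simple j = cs.wordProd ψ := by
      rw [cs.wordProd_concat, mul_assoc, cs.simple_mul_simple_self, mul_one]
    rw [h1]
    have h2 : cs.length (cs.wordProd ψ) ≤ ψ.length := cs.length_wordProd_le ψ
    have h3 : cs.length (cs.wordProd (ψ.concat j)) = ψ.length + 1 := by
      have := hred
      rwa [CoxeterSystem.IsReduced, List.length_concat] at this
    omega

end S9

namespace S9
open CoxeterSystem List
open scoped Classical
variable {B W : Type} [Group W] {M : CoxeterMatrix B} (cs : CoxeterSystem M W)
variable {G : Type} [Group G] [MulDistribMulAction G W] [MulAction G B]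

lemma smul_wordProd (hact : ∀ (σ : G) (i : B), σ • cs.simple i = cs.simple (σ • i))
    (σ : G) (ω : List B) :
    σ • cs.wordProd ω = cs.wordProd (ω.map (σ • ·)) := by
  induction ω with
  | nil => simp only [wordProd_nil, List.map_nil, smul_one, wordProd_nil]
  | cons k ω' ih =>
    rw [cs.wordProd_cons, smul_mul', ih, hact, List.map_cons, cs.wordProd_cons]

lemma length_smul (hact : ∀ (σ : G) (i : B), σ • cs.simple i = cs.simple (σ • i))
    (σ : G) (w : W) : cs.length (σ • w) = cs.length w := by
  have key : ∀ (τ : G) (v : W), cs.length (τ • v) ≤ cs.length v := by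
    intro τ v
    obtain ⟨ω, hω, rfl⟩ := cs.exists_reduced_word v
    rw [smul_wordProd cs hact]
    calc cs.length (cs.wordProd (ω.map (τ • ·))) ≤ (ω.map (τ • ·)).length :=
          cs.length_wordProd_le _
      _ = ω.length := List.length_map _
      _ = cs.length (cs.wordProd ω) := hω.symm
  refine le_antisymm (key σ w) ?_
  have := key σ⁻¹ (σ • w)
  rwa [inv_smul_smul] at this

lemma smul_mem_orbit' {G B : Type} [Group G] [MulAction G B] {i j : B} (σ : G)
    (hj : j ∈ MulAction.orbit G i) : σ • j ∈ MulAction.orbit G i := by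
  obtain ⟨g, rfl⟩ := hj
  exact ⟨σ * g, (smul_smul σ g i).symm⟩

lemma smul_mem_closure (hact : ∀ (σ : G) (i : B), σ • cs.simple i = cs.simple (σ • i))
    (i : B) (σ : G) {w : W}
    (hw : w ∈ Subgroup.closure (cs.simple '' MulAction.orbit G i)) :
    σ • w ∈ Subgroup.closure (cs.simple '' MulAction.orbit G i) := by
  obtain ⟨ω, hmem, rfl⟩ := (mem_closure_iff_word cs _ _).mp hw
  rw [smul_wordProd cs hact]
  apply (mem_closure_iff_word cs _ _).mpr
  refine ⟨ω.map (σ • ·), ?_, rfl⟩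
  intro x hx
  obtain ⟨y, hy, rfl⟩ := List.mem_map.mp hx
  exact smul_mem_orbit' σ (hmem y hy)

/-- The key lemma: an element of the parabolic all of whose orbit-simple reflections are
right descents equals the given longest element. -/
lemma eq_longest (I : Set B) (s : W) (hs : s ∈ Subgroup.closure (cs.simple '' I))
    (hlong : ∀ u ∈ Subgroup.closure (cs.simple '' I), cs.length u ≤ cs.length s)
    (w : W) (hw : w ∈ Subgroup.closure (cs.simple '' I))
    (hdesc : ∀ j ∈ I, cs.length (w * cs.simple j) < cs.length w) : w = s := by
  set y := w⁻¹ * s with hy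
  by_cases hy1 : y = 1
  · have : w⁻¹ * s = 1 := hy ▸ hy1
    have := congrArg (w * ·) this
    simpa [← mul_assoc] using this.symm
  · exfalso
    have hyP : y ∈ Subgroup.closure (cs.simple '' I) :=
      Subgroup.mul_mem _ (Subgroup.inv_mem _ hw) hs
    obtain ⟨j, hjI, hjdesc⟩ := exists_left_descent_in cs I y hyP hy1
    set t := y⁻¹ * cs.simple j * y with ht
    have htrefl : cs.IsReflection t := by
      have := (cs.isReflection_simple j).conj y⁻¹
      rwa [inv_inv] at this
    have htP : t ∈ Subgroup.closure (cs.simple '' I) := by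
      refine Subgroup.mul_mem _ (Subgroup.mul_mem _ (Subgroup.inv_mem _ hyP) ?_) hyP
      exact Subgroup.subset_closure ⟨j, hjI, rfl⟩
    have hst : cs.length (s * t) < cs.length s := by
      have hle : cs.length (s * t) ≤ cs.length s :=
        hlong _ (Subgroup.mul_mem _ hs htP)
      have hne : cs.length (s * t) ≠ cs.length s := htrefl.length_mul_left_ne s
      omega
    have hnns : nn cs s t = 1 := (nn_one_iff cs htrefl s).mpr hst
    have hnny : nn cs y t = 1 := by
      refine (nn_one_iff cs htrefl y).mpr ?_
      have : y * t = cs.simple j * y := by rw [ht]; group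
      rwa [this]
    have hnnw : nn cs w (cs.simple j) = 1 :=
      (nn_one_iff cs (cs.isReflection_simple j) w).mpr (hdesc j hjI)
    have hcoc : nn cs (w * y) t = nn cs y t + nn cs w (y * t * y⁻¹) := nn_cocycle cs w y t
    have h1 : w * y = s := by rw [hy]; group
    have h2 : y * t * y⁻¹ = cs.simple j := by rw [ht]; group
    rw [h1, h2, hnns, hnny, hnnw] at hcoc
    exact absurd hcoc (by decide)

end S9



noncomputable section

section Cox
variable (B W : Type) [Group W] (M : CoxeterMatrix B) (cs : CoxeterSystem M W)
  (G : Type) [Group G] [MulDistribMulAction G W]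

/-- The subgroup `W^G` of `G`-fixed points of `W`. -/
def fixedSubgroup : Subgroup W where
  carrier := {w | ∀ σ : G, σ • w = w}
  mul_mem' := by intro a b ha hb; intro σ; rw [smul_mul', ha, hb]
  one_mem' := by intro σ; exact smul_one σ
  inv_mem' := by intro a ha; intro σ; rw [smul_inv', ha]

/-- The standard parabolic subgroup `W_ω` generated by the simple reflections in the
`G`-orbit `ω` of `i`. -/
def parab [MulAction G B] (i : B) : Subgroup W :=
  Subgroup.closure (cs.simple '' MulAction.orbit G i)

/-- The set `S_G` of longest elements `s_ω` of the finite standard parabolic subgroups `W_ω`,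
`ω` running over the `G`-orbits in `S`. -/
def SGset [MulAction G B] : Set W :=
  {w | ∃ i : B, w ∈ parab B W M cs G i ∧ ((parab B W M cs G i : Set W)).Finite ∧
    ∀ u ∈ parab B W M cs G i, cs.length u ≤ cs.length w}
end Cox

/-!
STATEMENT 9: Let `ω` be a `G`-orbit in `S` such that `W_ω` is finite, with longest element
`s_ω`.  Then the fixed points of `G` in `W_ω` are exactly `{1, s_ω}`.
-/

theorem statement9 (B W : Type) [Group W] (M : CoxeterMatrix B) (cs : CoxeterSystem M W)
    (G : Type) [Group G] [MulDistribMulAction G W] [MulAction G B]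
    (hact : ∀ (σ : G) (i : B), σ • cs.simple i = cs.simple (σ • i))
    (i : B) (hfin : ((parab B W M cs G i : Set W)).Finite)
    (s : W) (hs : s ∈ parab B W M cs G i)
    (hlong : ∀ u ∈ parab B W M cs G i, cs.length u ≤ cs.length s) :
    {w : W | w ∈ parab B W M cs G i ∧ ∀ σ : G, σ • w = w} = {1, s} := by
  have hsP : s ∈ Subgroup.closure (cs.simple '' MulAction.orbit G i) := hs
  have hlong' : ∀ u ∈ Subgroup.closure (cs.simple '' MulAction.orbit G i),
      cs.length u ≤ cs.length s := hlong
  ext w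
  simp only [Set.mem_setOf_eq, Set.mem_insert_iff, Set.mem_singleton_iff]
  constructor
  · rintro ⟨hwP, hfix⟩
    by_cases hw1 : w = 1
    · exact Or.inl hw1
    · right
      refine S9.eq_longest cs (MulAction.orbit G i) s hsP hlong' w hwP ?_
      intro j hjI
      obtain ⟨j₀, hj₀I, hj₀desc⟩ :=
        S9.exists_right_descent_in cs (MulAction.orbit G i) w hwP hw1
      obtain ⟨g₀, hg₀⟩ := hj₀I
      obtain ⟨g, hg⟩ := hjI
      have hσ : (g * g₀⁻¹) • j₀ = j := by
        rw [← hg₀, ← hg, smul_smul]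
        congr 1
        group
      have hws : w * cs.simple j = (g * g₀⁻¹) • (w * cs.simple j₀) := by
        rw [smul_mul', hfix (g * g₀⁻¹), hact, hσ]
      rw [hws, S9.length_smul cs hact]
      exact hj₀desc
  · rintro (rfl | rfl)
    · exact ⟨Subgroup.one_mem _, fun σ => smul_one σ⟩
    · refine ⟨hs, fun σ => ?_⟩
      refine S9.eq_longest cs (MulAction.orbit G i) w hsP hlong' (σ • w)
        (S9.smul_mem_closure cs hact i σ hsP) ?_
      intro j hjI
      have h1 : σ • w * cs.simple j = σ • (w * cs.simple (σ⁻¹ • j)) := by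
        rw [smul_mul', hact, smul_inv_smul]
      have h2 : σ⁻¹ • j ∈ MulAction.orbit G i := S9.smul_mem_orbit' σ⁻¹ hjI
      rw [h1, S9.length_smul cs hact, S9.length_smul cs hact]
      have hle : cs.length (w * cs.simple (σ⁻¹ • j)) ≤ cs.length w := by
        refine hlong' _ (Subgroup.mul_mem _ hsP (Subgroup.subset_closure ⟨_, h2, rfl⟩))
      have hne : cs.length (w * cs.simple (σ⁻¹ • j)) ≠ cs.length w :=
        cs.length_mul_simple_ne w (σ⁻¹ • j)
      omega
end
end

section
/- Let $\mathrm{can}_G : \mathcal{H}_G \to \mathrm{Br}_G(\mathcal{H})$ be the canonical algebra morphism. If $h \in \mathcal{H}_G$ and $h' \in \mathcal{H}^G$ satisfy $\mathrm{can}_G(h) = \mathrm{br}_G(h')$, then $\tau_G(h) \equiv \tau(h') \pmod{pA}$, where $\tau$ and $\tau_G$ are the standard trace forms. -/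
noncomputable section

noncomputable section

noncomputable section
open scoped Classical

section HeckeDefs
variable (Γ : Type) [AddCommGroup Γ] [LinearOrder Γ] [IsOrderedAddMonoid Γ]

/-- The ring `A = ℤ[Γ]`, written exponentially. -/
abbrev AΓ := AddMonoidAlgebra ℤ Γ

/-- `e^γ ∈ A`. -/
def eΓ (γ : Γ) : AΓ Γ := AddMonoidAlgebra.single γ 1

/-- The involution `a ↦ ā` of `A = ℤ[Γ]`, `e^γ ↦ e^{-γ}`. -/
def barA : AΓ Γ →+ AΓ Γ := (AddMonoidAlgebra.coeffAddEquiv : AΓ Γ ≃+ (Γ →₀ ℤ)).symm.toAddMonoidHom.comp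
  ((Finsupp.mapDomain.addMonoidHom (fun γ : Γ => -γ)).comp
    (AddMonoidAlgebra.coeffAddEquiv : AΓ Γ ≃+ (Γ →₀ ℤ)).toAddMonoidHom)

/-- `A_{<0}`: elements of `A` supported in negative degrees. -/
def Aneg : Set (AΓ Γ) := {a | ∀ γ ∈ a.coeff.support, γ < 0}

/-- The degree of an element of `A` (`⊥` for `0`). -/
def degA (a : AΓ Γ) : WithBot Γ := a.coeff.support.sup (fun γ => (γ : WithBot Γ))

/-- A bundle consisting of the Hecke algebra data of a weighted Coxeter group `(W, len, φ)`
over `A = ℤ[Γ]`: the standard basis `T`, the bar involution, and the Kazhdan–Lusztig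
basis `C`, with their defining properties. -/
structure HeckeData (W : Type) [Group W] (len : W → ℕ) (φ : W → Γ)
    (H : Type) [Ring H] [Algebra (AΓ Γ) H] where
  /-- the standard basis `(T_w)` -/
  T : Module.Basis W (AΓ Γ) H
  T_one : T 1 = 1
  T_mul : ∀ x y : W, len (x * y) = len x + len y → T x * T y = T (x * y)
  T_quad : ∀ s : W, len s = 1 →
    (T s - algebraMap (AΓ Γ) H (eΓ Γ (φ s))) * (T s + algebraMap (AΓ Γ) H (eΓ Γ (-φ s))) = 0
  /-- the bar involution of `H` -/
  bar : H →+ H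
  bar_smul : ∀ (a : AΓ Γ) (h : H), bar (a • h) = barA Γ a • bar h
  bar_mul : ∀ h h' : H, bar (h * h') = bar h * bar h'
  bar_T : ∀ w : W, bar (T w) * T w⁻¹ = 1
  /-- the Kazhdan–Lusztig basis `(C_w)` -/
  C : Module.Basis W (AΓ Γ) H
  C_bar : ∀ w, bar (C w) = C w
  C_T : ∀ w v : W, (T.repr (C w) v - if v = w then 1 else 0) ∈ Aneg Γ

variable {Γ} {W : Type} [Group W] {len : W → ℕ} {φ : W → Γ}
  {H : Type} [Ring H] [Algebra (AΓ Γ) H]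

/-- The standard trace `τ(h) = ` coefficient of `T_1` in `h`. -/
def HeckeData.τ (HD : HeckeData Γ W len φ H) (h : H) : AΓ Γ := HD.T.repr h 1

/-- The structure constants `h_{x,y,z}` : `C_x C_y = ∑_z h_{x,y,z} C_z`. -/
def HeckeData.hc (HD : HeckeData Γ W len φ H) (x y z : W) : AΓ Γ :=
  HD.C.repr (HD.C x * HD.C y) z

/-- `γ_{x,y,u}`: the coefficient of `e^{𝐚(u⁻¹)}` in `h_{x,y,u⁻¹}`. -/
def HeckeData.gam (HD : HeckeData Γ W len φ H) (af : W → Γ) (x y u : W) : ℤ :=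
  (HD.hc x y u⁻¹).coeff (af u⁻¹)

/-- Boundedness of the weighted Coxeter group (Lusztig's conjecture 13.4). -/
def HeckeData.Bounded (HD : HeckeData Γ W len φ H) : Prop :=
  ∃ γ0 : Γ, ∀ x y z : W, degA Γ (HD.τ (HD.T x * HD.T y * HD.T z)) ≤ (γ0 : WithBot Γ)

/-- `af` is Lusztig's `𝐚`-function: `𝐚(z) = max_{x,y} deg h_{x,y,z}`. -/
def HeckeData.IsAF (HD : HeckeData Γ W len φ H) (af : W → Γ) : Prop :=
  ∀ z : W, (∃ x y, degA Γ (HD.hc x y z) = (af z : WithBot Γ)) ∧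
    ∀ x y, degA Γ (HD.hc x y z) ≤ (af z : WithBot Γ)

/-- `Δf` is the function `Δ`: `Δ(w) = - deg τ(C_w)`. -/
def HeckeData.IsDelta (HD : HeckeData Γ W len φ H) (Δf : W → Γ) : Prop :=
  ∀ w : W, degA Γ (HD.τ (HD.C w)) = ((-Δf w : Γ) : WithBot Γ)

/-- `n_w`: the coefficient of `e^{-Δ(w)}` in `τ(C_w)`. -/
def HeckeData.nC (HD : HeckeData Γ W len φ H) (Δf : W → Γ) (w : W) : ℤ :=
  (HD.τ (HD.C w)).coeff (-Δf w)

/-- The set `𝒟 = {w | 𝐚(w) = Δ(w)}` of Duflo involutions. -/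
def HeckeData.Duflo (HD : HeckeData Γ W len φ H) (af Δf : W → Γ) : Set W :=
  {z | af z = Δf z}

/-- The Kazhdan–Lusztig preorder `≤_L`. -/
def HeckeData.preL (HD : HeckeData Γ W len φ H) : W → W → Prop :=
  Relation.ReflTransGen (fun x y => ∃ z, HD.hc z y x ≠ 0)

/-- The Kazhdan–Lusztig preorder `≤_R`. -/
def HeckeData.preR (HD : HeckeData Γ W len φ H) : W → W → Prop :=
  Relation.ReflTransGen (fun x y => ∃ z, HD.hc y z x ≠ 0)

/-- The Kazhdan–Lusztig preorder `≤_{LR}`. -/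
def HeckeData.preLR (HD : HeckeData Γ W len φ H) : W → W → Prop :=
  Relation.ReflTransGen (fun x y => (∃ z, HD.hc z y x ≠ 0) ∨ (∃ z, HD.hc y z x ≠ 0))

/-- Left-cell equivalence `∼_L`. -/
def HeckeData.simL (HD : HeckeData Γ W len φ H) (x y : W) : Prop := HD.preL x y ∧ HD.preL y x

/-- Right-cell equivalence `∼_R`. -/
def HeckeData.simR (HD : HeckeData Γ W len φ H) (x y : W) : Prop := HD.preR x y ∧ HD.preR y x

/-- Two-sided cell equivalence `∼_{LR}`. -/
def HeckeData.simLR (HD : HeckeData Γ W len φ H) (x y : W) : Prop :=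
  HD.preLR x y ∧ HD.preLR y x

/-- Lusztig's conjectures `(P_1)`, `(P_2)`, `(P_3)`, `(P_4)`. -/
def HeckeData.P1to4 (HD : HeckeData Γ W len φ H) (af Δf : W → Γ) : Prop :=
  (∀ z : W, af z ≤ Δf z) ∧
  (∀ d ∈ HD.Duflo af Δf, ∀ x y : W, HD.gam af x y d ≠ 0 → x = y⁻¹) ∧
  (∀ y : W, ∃! d : W, d ∈ HD.Duflo af Δf ∧ HD.gam af y⁻¹ y d ≠ 0) ∧
  (∀ z' z : W, HD.preLR z' z → af z ≤ af z')

/-- Lusztig's conjecture `(P_9)`. -/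
def HeckeData.P9 (HD : HeckeData Γ W len φ H) (af : W → Γ) : Prop :=
  ∀ z' z : W, HD.preL z' z → af z' = af z → HD.simL z' z

/-- Lusztig's conjecture `(P_13)`. -/
def HeckeData.P13 (HD : HeckeData Γ W len φ H) (af Δf : W → Γ) : Prop :=
  (∀ y : W, ∃! d : W, d ∈ HD.Duflo af Δf ∧ HD.simL d y) ∧
  (∀ y d : W, d ∈ HD.Duflo af Δf → HD.simL d y → HD.gam af y⁻¹ y d ≠ 0)
end HeckeDefs

/-!
STATEMENT 11: if `can_G(h) = br_G(h')` for `h ∈ 𝓗_G` and `h' ∈ 𝓗^G`, then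
`τ_G(h) ≡ τ(h')  (mod pA)`.
-/

theorem statement11
    (p : ℕ) (hp : p.Prime)
    (Γ : Type) [AddCommGroup Γ] [LinearOrder Γ] [IsOrderedAddMonoid Γ]
    (B W : Type) [Group W] (M : CoxeterMatrix B) (cs : CoxeterSystem M W)
    (φ : W → Γ)
    (hφ : ∀ w w' : W, cs.length (w * w') = cs.length w + cs.length w' →
      φ (w * w') = φ w + φ w')
    (hφpos : ∀ s : W, cs.length s = 1 → 0 < φ s)
    (G : Type) [Group G] [Finite G] (hG : IsPGroup p G)
    [MulDistribMulAction G W] [MulAction G B]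
    (hact : ∀ (σ : G) (i : B), σ • cs.simple i = cs.simple (σ • i))
    (hφinv : ∀ (σ : G) (w : W), φ (σ • w) = φ w)
    (H : Type) [Ring H] [Algebra (AΓ Γ) H]
    (HD : HeckeData Γ W cs.length φ H)
    [MulSemiringAction G H] [SMulCommClass G (AΓ Γ) H]
    (hGT : ∀ (σ : G) (w : W), σ • HD.T w = HD.T (σ • w))
    (ι : Type) (M' : CoxeterMatrix ι) (cs' : CoxeterSystem M' (fixedSubgroup W G))
    (hS : Set.range (fun i => (cs'.simple i : W)) = SGset B W M cs G)
    (HG : Type) [Ring HG] [Algebra (AΓ Γ) HG]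
    (HDG : HeckeData Γ (fixedSubgroup W G) cs'.length (fun w => φ (w : W)) HG)
    :
    ∀ (u : HG) (h' : H), (∀ σ : G, σ • h' = h') →
      (HDG.T.constr (AΓ Γ) fun w => HD.T (w : W)) u - h' ∈ trSub G (AΓ Γ) H →
      HDG.τ u - HD.τ h' ∈ Ideal.span {(p : AΓ Γ)} := by
  intro u h' _hfix hmem
  classical
  -- the "coefficient of T₁" linear functional
  set L : H →ₗ[AΓ Γ] AΓ Γ :=
    (Finsupp.lapply (1 : W)).comp HD.T.repr.toLinearMap with hLdef
  have hLT : ∀ w : W, L (HD.T w) = if w = 1 then 1 else 0 := by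
    intro w
    simp [hLdef, Module.Basis.repr_self, Finsupp.single_apply]
  -- L is G-invariant
  have hLσ : ∀ (σ : G) (m : H), L (σ • m) = L m := by
    intro σ m
    have hmap : L.comp (DistribSMul.toLinearMap (AΓ Γ) H σ) = L := by
      apply HD.T.ext
      intro w
      simp only [LinearMap.comp_apply, DistribSMul.toLinearMap_apply, hGT]
      rw [hLT, hLT]
      congr 1
      simp only [eq_iff_iff]
      constructor
      · intro h
        have : (σ⁻¹ : G) • (σ • w) = (σ⁻¹ : G) • (1 : W) := by rw [h]
        simpa [smul_smul] using this
      · intro h; rw [h, smul_one]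
    exact DFunLike.congr_fun hmap m
  -- L maps the trace submodule into (p)
  have key : trSub G (AΓ Γ) H ≤ Submodule.comap L (Ideal.span {(p : AΓ Γ)}) := by
    rw [trSub, Submodule.span_le]
    intro x hx
    simp only [Set.mem_iUnion, Set.mem_setOf_eq] at hx
    obtain ⟨K, hK, m, _hm, rfl⟩ := hx
    simp only [SetLike.mem_coe, Submodule.mem_comap]
    have : Fintype (G ⧸ K) := Fintype.ofFinite _
    have hL1 : L (relTr G H K m) = (K.index : ℕ) • L m := by
      have hmf := AddMonoidHom.map_finsum L.toAddMonoidHom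
        (f := fun x : G ⧸ K => (Quotient.out x : G) • m) (Set.toFinite _)
      simp only [LinearMap.toAddMonoidHom_coe] at hmf
      rw [relTr, hmf]
      have : ∀ x : G ⧸ K, L ((Quotient.out x : G) • m) = L m := fun x => hLσ _ m
      rw [finsum_congr this, finsum_eq_sum_of_fintype, Finset.sum_const, Finset.card_univ]
      congr 1
      rw [Subgroup.index, Nat.card_eq_fintype_card]
    rw [hL1]
    -- p divides the index of a proper subgroup of a p-group
    have hdvd : p ∣ K.index := by
      haveI : Fact p.Prime := ⟨hp⟩
      obtain ⟨n, hn⟩ := hG.exists_card_eq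
      have h1 : K.index ∣ p ^ n := hn ▸ K.index_dvd_card
      obtain ⟨k, hk, hke⟩ := (Nat.dvd_prime_pow hp).mp h1
      rcases Nat.eq_zero_or_pos k with hk0 | hkpos
      · exfalso; apply hK
        rw [← Subgroup.index_eq_one, hke, hk0, pow_zero]
      · rw [hke]; exact dvd_pow_self p hkpos.ne'
    rw [Ideal.mem_span_singleton, nsmul_eq_mul]
    exact Dvd.dvd.mul_right (by exact_mod_cast Nat.cast_dvd_cast (α := AΓ Γ) hdvd) _
  have hmem' := key hmem
  simp only [Submodule.mem_comap, map_sub] at hmem'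
  have h1 : L ((HDG.T.constr (AΓ Γ) fun w => HD.T (w : W)) u) = HDG.τ u := by
    rw [Module.Basis.constr_apply, map_finsuppSum]
    have hco : ∀ (w : fixedSubgroup W G) (c : AΓ Γ),
        L (c • HD.T (w : W)) = if w = 1 then c else 0 := by
      intro w c
      rw [map_smul, hLT]
      by_cases h : w = 1
      · simp [h]
      · have : ((w : W) = 1) = False := by
          simp only [eq_iff_iff, iff_false]
          intro hc
          exact h (by ext; exact hc)
        simp [this, h]
    rw [Finsupp.sum_congr (g2 := fun w c => if w = 1 then c else 0) (fun w _ => hco w _),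
      Finsupp.sum_ite_eq' (HDG.T.repr u) 1 (fun _ v => v)]
    simp only [Finsupp.mem_support_iff, ne_eq, ite_not, HeckeData.τ]
    split
    · next h => rw [h]
    · rfl
  have h2 : L h' = HD.τ h' := rfl
  rw [← h1, ← h2]
  exact hmem'
end
end
end
end
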